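/- Boundary case of the two-task EMGD problem: let g₁, g₂ be vectors in a real inner product space and σ₁, σ₂ > 0. If σ₁⟨g₂, g₂⟩ < σ₂⟨g₁, g₂⟩, then (λ₁, λ₂) = (0, 1/σ₂) minimizes ‖λ₁ g₁ + λ₂ g₂‖² over all (λ₁, λ₂) with λ₁ ≥ 0, λ₂ ≥ 0 and λ₁σ₁ + λ₂σ₂ = 1. -/

import Mathlib

open RealInnerProductSpace

/-- boundary case of the two-task EMGD problem: if
`σ₁⟪g₂, g₂⟫ < σ₂⟪g₁, g₂⟫`, then `(λ₁, λ₂) = (0, 1/σ₂)` minimizes `‖λ₁ • g₁ + λ₂ • g₂‖²`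
over all nonnegative `(λ₁, λ₂)` with `λ₁σ₁ + λ₂σ₂ = 1`. -/
theorem stmt_11 {H : Type*} [NormedAddCommGroup H] [InnerProductSpace ℝ H]
    (g₁ g₂ : H) (σ₁ σ₂ : ℝ) (hσ₁ : 0 < σ₁) (hσ₂ : 0 < σ₂)
    (h : σ₁ * ⟪g₂, g₂⟫ < σ₂ * ⟪g₁, g₂⟫) :
    ∀ lam₁ lam₂ : ℝ, 0 ≤ lam₁ → 0 ≤ lam₂ → lam₁ * σ₁ + lam₂ * σ₂ = 1 →
      ‖(0 : ℝ) • g₁ + (1 / σ₂) • g₂‖ ^ 2 ≤ ‖lam₁ • g₁ + lam₂ • g₂‖ ^ 2 := by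
  intro lam₁ lam₂ h₁ h₂ hc
  rw [← real_inner_self_eq_norm_sq, ← real_inner_self_eq_norm_sq]
  have key : (0:ℝ) ≤ ⟪σ₂ • g₁ - σ₁ • g₂, σ₂ • g₁ - σ₁ • g₂⟫ := real_inner_self_nonneg
  have hcomm : ⟪g₂, g₁⟫ = ⟪g₁, g₂⟫ := real_inner_comm _ _
  simp only [inner_add_add_self, inner_sub_sub_self, real_inner_smul_left,
    real_inner_smul_right, zero_smul, zero_add, zero_mul, mul_zero] at *
  have hlam₂ : lam₂ = (1 - lam₁ * σ₁) / σ₂ := by field_simp; linarith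
  subst hlam₂
  have hσ₂' : σ₂ ≠ 0 := ne_of_gt hσ₂
  field_simp
  simp only [real_inner_comm g₂ g₁] at key ⊢
  rw [real_inner_comm g₂ g₁] at h
  nlinarith [mul_nonneg (mul_nonneg h₁ h₁) key,
    mul_nonneg h₁ (sub_pos.mpr h).le]
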